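/- Let I_1,…,I_k be finite sets and Φ ⊆ Ψ ⊆ I_1×⋯×I_k. If Ψ ⊵ Φ (Φ is a combinatorial degeneration of Ψ), then Q̃(Ψ) ≥ Q(Φ), i.e., the asymptotic subrank of Ψ is at least the subrank of Φ. -/

import Mathlib

open scoped BigOperators
open scoped Classical
open scoped ComplexOrder

noncomputable section

namespace CVZ

variable {k : ℕ}

/-- A concrete `k`-tensor over `F` with index types `I i`: the coefficient array
(in the standard bases) of a multilinear map `V₁ × ⋯ × V_k → F` with `dim V_i = |I i|`. -/
abbrev Tensor (F : Type*) (I : Fin k → Type*) : Type _ := (∀ i, I i) → F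

section Basic

variable {F : Type*} [Field F] {I J : Fin k → Type*}
  [∀ i, Fintype (I i)] [∀ i, DecidableEq (I i)]
  [∀ i, Fintype (J i)] [∀ i, DecidableEq (J i)]

/-- Coefficient array of the restriction `f ∘ (A₁, …, A_k)`, where `A_i : W_i → V_i`
is given by the matrix `A i`. -/
def restrictBy (A : ∀ i, Matrix (I i) (J i) F) (t : Tensor F I) : Tensor F J :=
  fun β => ∑ α : ∀ i, I i, (∏ i, A i (α i) (β i)) * t α

/-- `t` restricts to `s`. -/
def Restricts (t : Tensor F I) (s : Tensor F J) : Prop :=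
  ∃ A : ∀ i, Matrix (I i) (J i) F, restrictBy A t = s

/-- A choice of bases of the spaces `V_i`, encoded as a tuple of invertible matrices. -/
def IsBasisTuple (B : ∀ i, Matrix (I i) (I i) F) : Prop := ∀ i, IsUnit (B i)

/-- Support of a tensor (with respect to the standard bases). -/
def supp (t : Tensor F I) : Set (∀ i, I i) := {α | t α ≠ 0}

end Basic

section Entropy

/-- A probability distribution on the finite set `X`. -/
def IsProbDist {X : Type*} [Fintype X] (P : X → ℝ) : Prop :=
  (∀ x, 0 ≤ P x) ∧ ∑ x, P x = 1

/-- Base-2 Shannon entropy. -/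
def H2 {X : Type*} [Fintype X] (P : X → ℝ) : ℝ :=
  ∑ x, -(P x * Real.logb 2 (P x))

variable {I : Fin k → Type*} [∀ i, Fintype (I i)] [∀ i, DecidableEq (I i)]

/-- The `i`-th marginal of a distribution on a product set. -/
def marg (P : (∀ i, I i) → ℝ) (i : Fin k) : I i → ℝ :=
  fun a => ∑ α : ∀ i, I i, if α i = a then P α else 0

/-- `H_θ(P)`, the `θ`-weighted average of the marginal entropies. -/
def Hw (θ : Fin k → ℝ) (P : (∀ i, I i) → ℝ) : ℝ :=
  ∑ i, θ i * H2 (marg P i)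

/-- `H_θ(Φ)`, the supremum of `H_θ(P)` over distributions `P` supported on `Φ`. -/
def HwSet (θ : Fin k → ℝ) (Φ : Set (∀ i, I i)) : ℝ :=
  sSup {h | ∃ P : (∀ i, I i) → ℝ, IsProbDist P ∧ (∀ α, P α ≠ 0 → α ∈ Φ) ∧ h = Hw θ P}

/-- Maximal points of a subset of the product order. -/
def maxPoints [∀ i, LinearOrder (I i)] (Φ : Set (∀ i, I i)) : Set (∀ i, I i) :=
  {α | α ∈ Φ ∧ ∀ β ∈ Φ, ¬ α < β}

end Entropy

section SuppFunc

variable {F : Type*} [Field F] {I : Fin k → Type*} [∀ i, Fintype (I i)] [∀ i, DecidableEq (I i)]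

/-- The logarithmic Strassen upper support functional `ρ^θ`. -/
def rhoUpper (θ : Fin k → ℝ) (t : Tensor F I) : ℝ :=
  sInf {h | ∃ B : ∀ i, Matrix (I i) (I i) F, IsBasisTuple B ∧
    h = HwSet θ (supp (restrictBy B t))}

/-- The Strassen upper support functional `ζ^θ`. -/
def zetaUpper (θ : Fin k → ℝ) (t : Tensor F I) : ℝ :=
  if t = 0 then 0 else (2 : ℝ) ^ rhoUpper θ t

/-- The logarithmic Strassen lower support functional `ρ_θ`. -/
def rhoLower [∀ i, LinearOrder (I i)] (θ : Fin k → ℝ) (t : Tensor F I) : ℝ :=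
  sSup {h | ∃ B : ∀ i, Matrix (I i) (I i) F, IsBasisTuple B ∧
    h = HwSet θ (maxPoints (supp (restrictBy B t)))}

/-- The Strassen lower support functional `ζ_θ`. -/
def zetaLower [∀ i, LinearOrder (I i)] (θ : Fin k → ℝ) (t : Tensor F I) : ℝ :=
  if t = 0 then 0 else (2 : ℝ) ^ rhoLower θ t

/-- The instability of a tensor. -/
def instab (t : Tensor F I) : ℝ :=
  sSup {ε : ℝ | 0 ≤ ε ∧ ∃ B : ∀ i, Matrix (I i) (I i) F, IsBasisTuple B ∧
    ∃ w : ∀ i, I i → ℝ, (∀ i x, 0 ≤ w i x) ∧ (∀ i, ∃ x, w i x ≠ 0) ∧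
      ∀ a ∈ supp (restrictBy B t), ∑ i, w i (a i) ≤
        ∑ i, ((∑ x : I i, w i x) / (Fintype.card (I i) : ℝ) - ε * ⨆ x : I i, w i x)}

end SuppFunc

section Ops

variable {F : Type*} [Field F]

/-- The unit tensor `⟨r⟩`. -/
def unitTensor (F : Type*) [Field F] (k r : ℕ) : Tensor F (fun _ : Fin k => Fin r) :=
  fun α => if ∀ i j : Fin k, α i = α j then 1 else 0

variable {n m : Fin k → ℕ}

/-- Direct sum of two tensors, with the concatenated (naturally ordered) bases. -/
def dirSumFin (s : Tensor F fun i => Fin (n i)) (t : Tensor F fun i => Fin (m i)) :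
    Tensor F fun i => Fin (n i + m i) :=
  fun α =>
    (if h : ∀ i, (α i : ℕ) < n i then s (fun i => ⟨(α i : ℕ), h i⟩) else 0) +
    (if h : ∀ i, n i ≤ (α i : ℕ) then
      t (fun i => ⟨(α i : ℕ) - n i, by have h1 := (α i).isLt; have h2 := h i; omega⟩) else 0)

/-- Tensor (Kronecker) product of two tensors, with the product bases ordered naturally. -/
def tensMulFin (s : Tensor F fun i => Fin (n i)) (t : Tensor F fun i => Fin (m i)) :
    Tensor F fun i => Fin (n i * m i) :=
  fun α =>
    s (fun i => ⟨(α i : ℕ) / m i, by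
      have h := (α i).isLt
      exact Nat.div_lt_of_lt_mul (lt_of_lt_of_le h (Nat.mul_comm (n i) (m i)).le)⟩) *
    t (fun i => ⟨(α i : ℕ) % m i, by
      have h := (α i).isLt
      have hpos : 0 < n i * m i := Nat.lt_of_le_of_lt (Nat.zero_le _) h
      have hm : 0 < m i := by
        rcases Nat.eq_zero_or_pos (m i) with h0 | h0
        · simp [h0] at hpos
        · exact h0
      exact Nat.mod_lt _ hm⟩)

/-- The `N`-th tensor power of a tensor (grouping the legs into `k` groups). -/
def tpow {I : Fin k → Type*} (t : Tensor F I) (N : ℕ) : Tensor F fun i => Fin N → I i :=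
  fun α => ∏ j : Fin N, t fun i => α i j

end Ops

section Subrank

variable {F : Type*} [Field F] {I : Fin k → Type*} [∀ i, Fintype (I i)] [∀ i, DecidableEq (I i)]

/-- The subrank `Q(t)` of a tensor: the largest `r` with `⟨r⟩ ≤ t`. -/
def Qtensor (t : Tensor F I) : ℕ :=
  sSup {r : ℕ | Restricts t (unitTensor F k r)}

/-- A slice: a tensor of the form `v ⊗ w` with `v` in the `j`-th leg. -/
def IsSlice (s : Tensor F I) : Prop :=
  ∃ (j : Fin k) (v : I j → F) (w : (∀ i : {i : Fin k // i ≠ j}, I i.1) → F),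
    ∀ α, s α = v (α j) * w (fun i => α i.1)

/-- The slice rank of a tensor. -/
def sliceRank (t : Tensor F I) : ℕ :=
  sInf {r : ℕ | ∃ c : Fin r → Tensor F I, (∀ a, IsSlice (c a)) ∧ t = ∑ a, c a}

end Subrank

section Combinatorial

variable {I : Fin k → Type*}

/-- A diagonal: any two distinct elements differ in all coordinates. -/
def IsDiagonal (D : Set (∀ i, I i)) : Prop :=
  ∀ a ∈ D, ∀ b ∈ D, a ≠ b → ∀ i, a i ≠ b i

/-- The `i`-th projection of a set of tuples. -/
def projSet (D : Set (∀ i, I i)) (i : Fin k) : Set (I i) := {x | ∃ a ∈ D, a i = x}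

/-- A free diagonal in `Φ`: a diagonal `D` with `D = Φ ∩ (D₁ × ⋯ × D_k)`. -/
def IsFreeDiagonal (D Φ : Set (∀ i, I i)) : Prop :=
  IsDiagonal D ∧ D = Φ ∩ {a | ∀ i, a i ∈ projSet D i}

/-- The (combinatorial) subrank of a set: the maximal size of a free diagonal. -/
def Qset (Φ : Set (∀ i, I i)) : ℕ :=
  sSup {r : ℕ | ∃ D : Set (∀ i, I i), IsFreeDiagonal D Φ ∧ D.ncard = r}

/-- The `N`-fold coordinatewise power of a set of tuples. -/
def setPow (Φ : Set (∀ i, I i)) (N : ℕ) : Set (∀ i, Fin N → I i) :=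
  {α | ∀ j : Fin N, (fun i => α i j) ∈ Φ}

/-- A tight set. -/
def TightSet (Φ : Set (∀ i, I i)) : Prop :=
  ∃ u : ∀ i, I i → ℤ, (∀ i, Function.Injective (u i)) ∧ ∀ α ∈ Φ, ∑ i, u i (α i) = 0

/-- `Φ` is a combinatorial degeneration of `Ψ` (written `Ψ ⊵ Φ`). -/
def CombDegen (Ψ Φ : Set (∀ i, I i)) : Prop :=
  Φ ⊆ Ψ ∧ ∃ u : ∀ i, I i → ℤ,
    (∀ α ∈ Φ, ∑ i, u i (α i) = 0) ∧ ∀ α ∈ Ψ, α ∉ Φ → 0 < ∑ i, u i (α i)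

end Combinatorial

/-- A tight tensor: some basis tuple gives a tight support. -/
def TightTensor {F : Type*} [Field F] {I : Fin k → Type*} [∀ i, Fintype (I i)]
    [∀ i, DecidableEq (I i)] (t : Tensor F I) : Prop :=
  ∃ B : ∀ i, Matrix (I i) (I i) F, IsBasisTuple B ∧ TightSet (supp (restrictBy B t))

/-- A complete (decreasing) flag of subspaces, `W 0 = ⊤` and `dim (W j) = dim V − j`. -/
def IsCompleteFlag (F : Type*) [Field F] {V : Type*} [AddCommGroup V] [Module F V]
    (W : ℕ → Submodule F V) : Prop :=
  Antitone W ∧ W 0 = ⊤ ∧ ∀ j : ℕ, Module.finrank F (W j) = Module.finrank F V - j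

/-- Evaluation of (the multilinear map associated with) `t` at a tuple of vectors. -/
def eval {F : Type*} [Field F] {I : Fin k → Type*} [∀ i, Fintype (I i)] [∀ i, DecidableEq (I i)]
    (t : Tensor F I) (v : ∀ i, I i → F) : F :=
  ∑ α : ∀ i, I i, (∏ i, v i (α i)) * t α

/-- The support of `t` with respect to a tuple of complete flags. -/
def suppFlag {F : Type*} [Field F] {n : Fin k → ℕ} (t : Tensor F fun i => Fin (n i))
    (W : ∀ i, ℕ → Submodule F (Fin (n i) → F)) : Set (∀ i, Fin (n i)) :=
  {α | ∃ v : ∀ i, Fin (n i) → F, (∀ i, v i ∈ W i (α i : ℕ)) ∧ eval t v ≠ 0}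

section Quantum

variable {I : Fin k → Type*} [∀ i, Fintype (I i)] [∀ i, DecidableEq (I i)]

/-- Von Neumann entropy (base 2) of a Hermitian matrix. -/
def vnEntropy {d : Type*} [Fintype d] [DecidableEq d] (ρ : Matrix d d ℂ) : ℝ :=
  if h : ρ.IsHermitian then ∑ x, -(h.eigenvalues x * Real.logb 2 (h.eigenvalues x)) else 0

/-- The `j`-th marginal (reduced density matrix) of the pure state `|t⟩⟨t| / ⟨t|t⟩`. -/
def margMat (t : Tensor ℂ I) (j : Fin k) : Matrix (I j) (I j) ℂ :=
  fun a b =>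
    (∑ α : ∀ i, I i, ∑ β : ∀ i, I i,
      if α j = a ∧ β j = b ∧ (∀ i, i ≠ j → α i = β i) then t α * star (t β) else 0) /
    ∑ α : ∀ i, I i, t α * star (t α)

/-- The logarithmic lower quantum functional `E_θ` for `θ` a distribution on `[k]`. -/
def Ewq (θ : Fin k → ℝ) (t : Tensor ℂ I) : ℝ :=
  sSup {h | ∃ A : ∀ i, Matrix (I i) (I i) ℂ, IsBasisTuple A ∧
    h = ∑ j, θ j * vnEntropy (margMat (restrictBy A t) j)}

/-- The marginal (reduced density matrix) on the legs in `S` of the pure state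
`|t⟩⟨t| / ⟨t|t⟩`. -/
def margMatSet (t : Tensor ℂ I) (S : Finset (Fin k)) :
    Matrix (∀ i : {x : Fin k // x ∈ S}, I i.1) (∀ i : {x : Fin k // x ∈ S}, I i.1) ℂ :=
  fun a b =>
    (∑ α : ∀ i, I i, ∑ β : ∀ i, I i,
      if (∀ (i : Fin k) (hi : i ∈ S), α i = a ⟨i, hi⟩ ∧ β i = b ⟨i, hi⟩) ∧
         (∀ i, i ∉ S → α i = β i)
      then t α * star (t β) else 0) /
    ∑ α : ∀ i, I i, t α * star (t α)

/-- A probability distribution on the bipartitions `{S, S̄}` of `[k]` (encoded by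
choosing a representative `S` for each bipartition occurring in the support). -/
def IsBipDist (θ : Finset (Fin k) → ℝ) : Prop :=
  (∀ S, 0 ≤ θ S) ∧ (∀ S, θ S ≠ 0 → S.Nonempty ∧ Sᶜ.Nonempty) ∧
    ∑ S : Finset (Fin k), θ S = 1

/-- The logarithmic lower quantum functional `E_θ` for `θ` a distribution on bipartitions. -/
def EwqBip (θ : Finset (Fin k) → ℝ) (t : Tensor ℂ I) : ℝ :=
  sSup {h | ∃ A : ∀ i, Matrix (I i) (I i) ℂ, IsBasisTuple A ∧
    h = ∑ S : Finset (Fin k), θ S * vnEntropy (margMatSet (restrictBy A t) S)}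

/-- The lower quantum functional `F_θ`. -/
def FwqBip (θ : Finset (Fin k) → ℝ) (t : Tensor ℂ I) : ℝ :=
  if t = 0 then 0 else (2 : ℝ) ^ EwqBip θ t

/-- Degeneration: `t` lies in the closure of the `GL × ⋯ × GL`-orbit of `s`. -/
def Degen (s t : Tensor ℂ I) : Prop :=
  t ∈ closure {u : Tensor ℂ I | ∃ A : ∀ i, Matrix (I i) (I i) ℂ,
    IsBasisTuple A ∧ restrictBy A s = u}

end Quantum

/-- Trace norm of a complex matrix: `Tr √(AᴴA)`. -/
def traceNorm {d : Type*} [Fintype d] [DecidableEq d] (A : Matrix d d ℂ) : ℝ :=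
  (((Matrix.posSemidef_conjTranspose_mul_self A).1.eigenvectorUnitary.1 *
    Matrix.diagonal (fun x => ((Real.sqrt ((Matrix.posSemidef_conjTranspose_mul_self A).1.eigenvalues x) : ℝ) : ℂ)) *
    (star (Matrix.posSemidef_conjTranspose_mul_self A).1.eigenvectorUnitary : Matrix d d ℂ)).trace).re

/-- `conjIter ρ X j = X_j ⋯ X_2 X_1 ρ X_1 X_2 ⋯ X_j`. -/
def conjIter {d : Type*} [Fintype d] (ρ : Matrix d d ℂ) {n : ℕ}
    (X : Fin n → Matrix d d ℂ) : ℕ → Matrix d d ℂ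
  | 0 => ρ
  | (j + 1) => if h : j < n then X ⟨j, h⟩ * conjIter ρ X j * X ⟨j, h⟩ else conjIter ρ X j

/-- A tricolored sum-free set in `G × G × G`. -/
def IsTriColoredSumFree {G : Type*} [AddCommGroup G] (Γ : Set (G × G × G)) : Prop :=
  (∀ a ∈ Γ, ∀ b ∈ Γ, a ≠ b → a.1 ≠ b.1 ∧ a.2.1 ≠ b.2.1 ∧ a.2.2 ≠ b.2.2) ∧
  ∀ x y z : G, (∃ a ∈ Γ, a.1 = x) → (∃ a ∈ Γ, a.2.1 = y) → (∃ a ∈ Γ, a.2.2 = z) →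
    (x + y + z = 0 ↔ (x, y, z) ∈ Γ)

/-- The maximal size `s₃(G)` of a tricolored sum-free set in `G × G × G`. -/
def s3 (G : Type*) [AddCommGroup G] : ℕ :=
  sSup {r : ℕ | ∃ Γ : Set (G × G × G), IsTriColoredSumFree Γ ∧ Γ.ncard = r}

/-- Binary entropy function (base 2), with the convention `0 · log 0 = 0`. -/
def binH (p : ℝ) : ℝ := -(p * Real.logb 2 p) - (1 - p) * Real.logb 2 (1 - p)

open Filter Topology

private lemma aux_bdd {k : ℕ} {I : Fin k → Type*} [∀ i, Fintype (I i)]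
    (Φ : Set (∀ i, I i)) :
    BddAbove {r : ℕ | ∃ D : Set (∀ i, I i), IsFreeDiagonal D Φ ∧ D.ncard = r} := by
  refine ⟨Nat.card (∀ i, I i), ?_⟩
  rintro r ⟨D, hD, rfl⟩
  calc D.ncard ≤ (Set.univ : Set (∀ i, I i)).ncard :=
        Set.ncard_le_ncard (Set.subset_univ _) Set.finite_univ
    _ = Nat.card _ := Set.ncard_univ _

private lemma aux_le_qset {k : ℕ} {I : Fin k → Type*} [∀ i, Fintype (I i)]
    {Φ D : Set (∀ i, I i)} (hD : IsFreeDiagonal D Φ) : D.ncard ≤ Qset Φ :=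
  le_csSup (aux_bdd Φ) ⟨D, hD, rfl⟩

private lemma aux_key {k : ℕ} {I : Fin k → Type*} [∀ i, Fintype (I i)]
    {Φ Ψ : Set (∀ i, I i)} (hsub : Φ ⊆ Ψ) (u : ∀ i, I i → ℤ)
    (hu0 : ∀ α ∈ Φ, ∑ i, u i (α i) = 0)
    (hupos : ∀ α ∈ Ψ, α ∉ Φ → 0 < ∑ i, u i (α i))
    {D : Set (∀ i, I i)} (hD : IsFreeDiagonal D Φ) (hDne : D.Nonempty)
    (M : ℕ) (hM : ∀ i x, (u i x).natAbs ≤ M) (N : ℕ) :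
    D.ncard ^ N ≤ (2 * N * M + 1) ^ k * Qset (setPow Ψ N) := by
  classical
  have hDΦ : D ⊆ Φ := by rw [hD.2]; exact Set.inter_subset_left
  set PowD : Finset (∀ i, Fin N → I i) :=
    Finset.univ.filter (fun a => ∀ j, (fun i => a i j) ∈ D) with hPowD
  have hmemPow : ∀ a, a ∈ PowD ↔ ∀ j, (fun i => a i j) ∈ D := by
    intro a; simp [hPowD]
  have hcard : PowD.card = D.ncard ^ N := by
    rw [Set.ncard_eq_toFinset_card' D]
    have hb : PowD.card = (Fintype.piFinset fun _ : Fin N => D.toFinset).card := by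
      apply Finset.card_bij' (fun a _ => fun j i => a i j) (fun d _ => fun i j => d j i)
      · intro a ha
        rw [Fintype.mem_piFinset]
        intro j
        simpa using (hmemPow a).1 ha j
      · intro d hd
        rw [hmemPow]
        intro j
        have := Fintype.mem_piFinset.1 hd j
        simpa using this
      · intro a _; rfl
      · intro d _; rfl
    rw [hb, Fintype.card_piFinset]
    simp
  set s : (∀ i, Fin N → I i) → (Fin k → ℤ) := fun a i => ∑ j, u i (a i j) with hs
  set T := PowD.image s with hT
  have hTcard : T.card ≤ (2 * N * M + 1) ^ k := by
    have hTsub : T ⊆ Fintype.piFinset fun _ : Fin k =>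
        Finset.Icc (-(N * M : ℤ)) (N * M) := by
      intro v hv
      obtain ⟨a, _, rfl⟩ := Finset.mem_image.1 hv
      rw [Fintype.mem_piFinset]
      intro i
      rw [Finset.mem_Icc]
      have habs : |∑ j, u i (a i j)| ≤ (N * M : ℤ) := by
        calc |∑ j, u i (a i j)| ≤ ∑ j, |u i (a i j)| := Finset.abs_sum_le_sum_abs _ _
          _ ≤ ∑ _j : Fin N, (M : ℤ) := Finset.sum_le_sum (fun j _ => by
              rw [Int.abs_eq_natAbs]; exact_mod_cast hM i (a i j))
          _ = (N * M : ℤ) := by simp [mul_comm]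
      exact ⟨by linarith [neg_abs_le (∑ j, u i (a i j))],
        le_trans (le_abs_self _) habs⟩
    calc T.card ≤ _ := Finset.card_le_card hTsub
      _ = (2 * N * M + 1) ^ k := by
          rw [Fintype.card_piFinset]
          have : (Finset.Icc (-(N * M : ℤ)) (N * M)).card = 2 * N * M + 1 := by
            rw [Int.card_Icc, mul_assoc, ← Nat.cast_mul]
            generalize N * M = P
            omega
          simp [this]
  have hPowDne : PowD.Nonempty := by
    obtain ⟨d, hd⟩ := hDne
    exact ⟨fun i _ => d i, (hmemPow _).2 fun j => hd⟩
  have hTne : T.Nonempty := hPowDne.image s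
  obtain ⟨v, hvT, hvmax⟩ :=
    T.exists_max_image (fun w => (PowD.filter fun a => s a = w).card) hTne
  set F := PowD.filter (fun a => s a = v) with hF
  have hsumcard : PowD.card ≤ T.card * F.card := by
    calc PowD.card = ∑ w ∈ T, (PowD.filter fun a => s a = w).card :=
          Finset.card_eq_sum_card_fiberwise fun a ha => Finset.mem_image_of_mem s ha
      _ ≤ T.card * F.card := by
          rw [← smul_eq_mul]
          exact Finset.sum_le_card_nsmul _ _ _ fun w hw => hvmax w hw
  have hfactor0 : ∀ a ∈ PowD, ∑ i, s a i = 0 := by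
    intro a ha
    rw [hs]
    rw [Finset.sum_comm]
    apply Finset.sum_eq_zero
    intro j _
    exact hu0 _ (hDΦ ((hmemPow a).1 ha j))
  obtain ⟨a₀, ha₀P, ha₀v⟩ := Finset.mem_image.1 hvT
  have hvsum : ∑ i, v i = 0 := by
    rw [← ha₀v]; exact hfactor0 a₀ ha₀P
  have hsv : ∀ a ∈ F, s a = v := fun a ha => (Finset.mem_filter.1 ha).2
  have hFP : ∀ a ∈ F, a ∈ PowD := fun a ha => (Finset.mem_filter.1 ha).1
  have hfree : IsFreeDiagonal (↑F : Set (∀ i, Fin N → I i)) (setPow Ψ N) := by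
    constructor
    · intro a haF b hbF hab i
      have ha : a ∈ PowD := hFP a haF
      have hb : b ∈ PowD := hFP b hbF
      have : ∃ i₀, a i₀ ≠ b i₀ := by
        by_contra h'
        push_neg at h'
        exact hab (funext h')
      obtain ⟨i₀, hi₀⟩ := this
      have : ∃ j₀, a i₀ j₀ ≠ b i₀ j₀ := by
        by_contra h'
        push_neg at h'
        exact hi₀ (funext h')
      obtain ⟨j₀, hj₀⟩ := this
      have hdne : (fun i => a i j₀) ≠ (fun i => b i j₀) := by
        intro h'
        exact hj₀ (congrFun h' i₀)
      have := hD.1 _ ((hmemPow a).1 ha j₀) _ ((hmemPow b).1 hb j₀) hdne i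
      intro heq
      exact this (congrFun heq j₀)
    · ext β
      constructor
      · intro hβ
        refine ⟨fun j => hsub (hDΦ ((hmemPow β).1 (hFP β hβ) j)), fun i => ⟨β, hβ, rfl⟩⟩
      · rintro ⟨hβΨ, hproj⟩
        choose w hwF hwi using hproj
        have hβv : ∀ i, ∑ j, u i (β i j) = v i := by
          intro i
          rw [← hwi i]
          exact congrFun (hsv (w i) (hwF i)) i
        have hall0 : ∑ j : Fin N, ∑ i, u i (β i j) = 0 := by
          rw [← Finset.sum_comm]
          calc ∑ i, ∑ j, u i (β i j) = ∑ i, v i := Finset.sum_congr rfl fun i _ => hβv i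
            _ = 0 := hvsum
        have hnn : ∀ j ∈ (Finset.univ : Finset (Fin N)), 0 ≤ ∑ i, u i (β i j) := by
          intro j _
          by_cases hΦ : (fun i => β i j) ∈ Φ
          · exact le_of_eq (hu0 _ hΦ).symm
          · exact le_of_lt (hupos _ (hβΨ j) hΦ)
        have heach : ∀ j, ∑ i, u i (β i j) = 0 := by
          intro j
          exact (Finset.sum_eq_zero_iff_of_nonneg hnn).1 hall0 j (Finset.mem_univ j)
        have hfacΦ : ∀ j, (fun i => β i j) ∈ Φ := by
          intro j
          by_contra hΦ
          exact absurd (heach j) (ne_of_gt (hupos _ (hβΨ j) hΦ))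
        have hfacD : ∀ j, (fun i => β i j) ∈ D := by
          intro j
          rw [hD.2]
          refine ⟨hfacΦ j, fun i => ⟨fun i' => w i i' j, (hmemPow _).1 (hFP _ (hwF i)) j, ?_⟩⟩
          exact congrFun (hwi i) j
        have hβP : β ∈ PowD := (hmemPow β).2 hfacD
        exact Finset.mem_filter.2 ⟨hβP, funext fun i => hβv i⟩
  have hQ : F.card ≤ Qset (setPow Ψ N) := by
    have := aux_le_qset hfree
    rwa [Set.ncard_coe_finset] at this
  calc D.ncard ^ N = PowD.card := hcard.symm
    _ ≤ T.card * F.card := hsumcard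
    _ ≤ (2 * N * M + 1) ^ k * Qset (setPow Ψ N) := Nat.mul_le_mul hTcard hQ

/-- combinatorial degeneration: asymptotic subrank ≥ subrank. -/
theorem statement12 {k : ℕ} {I : Fin k → Type*} [∀ i, Fintype (I i)]
    (Φ Ψ : Set (∀ i, I i)) (h : CombDegen Ψ Φ) :
    ∀ L : ℝ, Tendsto (fun N : ℕ => (Qset (setPow Ψ N) : ℝ) ^ ((N : ℝ)⁻¹)) atTop (𝓝 L) →
      (Qset Φ : ℝ) ≤ L := by
  intro L hL
  obtain ⟨hsub, u, hu0, hupos⟩ := h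
  by_cases hr : Qset Φ = 0
  · rw [hr]
    push_cast
    exact le_of_tendsto_of_tendsto' tendsto_const_nhds hL
      (fun N => Real.rpow_nonneg (Nat.cast_nonneg _) _)
  have hS : {r : ℕ | ∃ D : Set (∀ i, I i), IsFreeDiagonal D Φ ∧ D.ncard = r}.Nonempty := by
    by_contra hne
    rw [Set.not_nonempty_iff_eq_empty] at hne
    apply hr
    rw [Qset, hne]
    simp
  obtain ⟨D, hD, hDcard⟩ := Nat.sSup_mem hS (aux_bdd Φ)
  have hDQ : D.ncard = Qset Φ := hDcard
  have hDne : D.Nonempty := by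
    apply Set.nonempty_of_ncard_ne_zero
    rw [hDQ]
    exact hr
  set M : ℕ := (Finset.univ.sup fun i : Fin k =>
    Finset.univ.sup fun x : I i => (u i x).natAbs) + 1 with hMdef
  have hM : ∀ i x, (u i x).natAbs ≤ M := by
    intro i x
    calc (u i x).natAbs ≤ Finset.univ.sup fun x : I i => (u i x).natAbs :=
          Finset.le_sup (f := fun x : I i => (u i x).natAbs) (Finset.mem_univ x)
      _ ≤ Finset.univ.sup fun i : Fin k =>
            Finset.univ.sup fun x : I i => (u i x).natAbs :=
          Finset.le_sup (f := fun i : Fin k => Finset.univ.sup fun x : I i => (u i x).natAbs)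
            (Finset.mem_univ i)
      _ ≤ M := Nat.le_succ _
  have hM1 : 1 ≤ M := Nat.le_add_left 1 _
  have hkey : ∀ N : ℕ, Qset Φ ^ N ≤ (2 * N * M + 1) ^ k * Qset (setPow Ψ N) := by
    intro N
    rw [← hDQ]
    exact aux_key hsub u hu0 hupos hD hDne M hM N
  -- analysis
  set r : ℕ := Qset Φ with hrdef
  have hMR : (1 : ℝ) ≤ (M : ℝ) := by exact_mod_cast hM1
  have hbase : ∀ N : ℕ, (0 : ℝ) < 2 * (N : ℝ) * (M : ℝ) + 1 := by
    intro N
    have : (0 : ℝ) ≤ (N : ℝ) := Nat.cast_nonneg N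
    nlinarith
  set den : ℕ → ℝ := fun N => ((2 * (N : ℝ) * (M : ℝ) + 1) ^ k) ^ ((N : ℝ)⁻¹) with hden
  have hlogdiv : Tendsto (fun N : ℕ => Real.log (2 * (N : ℝ) * (M : ℝ) + 1) / (N : ℝ))
      atTop (𝓝 0) := by
    have h1 : Tendsto (fun x : ℝ => Real.log x / x) atTop (𝓝 0) :=
      Real.isLittleO_log_id_atTop.tendsto_div_nhds_zero
    have hφ : Tendsto (fun N : ℕ => 2 * (N : ℝ) * (M : ℝ) + 1) atTop atTop := by
      apply Filter.tendsto_atTop_add_const_right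
      have h2 : Tendsto (fun N : ℕ => (N : ℝ) * (2 * (M : ℝ))) atTop atTop :=
        Filter.Tendsto.atTop_mul_const (by nlinarith) tendsto_natCast_atTop_atTop
      apply h2.congr
      intro N
      ring
    have h2 : Tendsto (fun N : ℕ =>
        Real.log (2 * (N : ℝ) * (M : ℝ) + 1) / (2 * (N : ℝ) * (M : ℝ) + 1))
        atTop (𝓝 0) := h1.comp hφ
    have h4 : Tendsto (fun N : ℕ => (2 * (N : ℝ) * (M : ℝ) + 1) / (N : ℝ))
        atTop (𝓝 (2 * (M : ℝ))) := by
      have h5 : Tendsto (fun N : ℕ => 2 * (M : ℝ) + (N : ℝ)⁻¹) atTop (𝓝 (2 * (M : ℝ) + 0)) :=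
        tendsto_const_nhds.add (tendsto_inv_atTop_zero.comp tendsto_natCast_atTop_atTop)
      rw [add_zero] at h5
      apply h5.congr'
      filter_upwards [eventually_ge_atTop 1] with N hN
      have hN0 : (N : ℝ) ≠ 0 := Nat.cast_ne_zero.2 (by omega)
      field_simp
    have h6 := h2.mul h4
    rw [zero_mul] at h6
    apply h6.congr
    intro N
    have hφ0 : (2 * (N : ℝ) * (M : ℝ) + 1) ≠ 0 := ne_of_gt (hbase N)
    by_cases hN : (N : ℝ) = 0
    · simp [hN]
    · field_simp
  have hden1 : Tendsto den atTop (𝓝 1) := by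
    have hrw : den = fun N : ℕ =>
        Real.exp ((k : ℝ) * (Real.log (2 * (N : ℝ) * (M : ℝ) + 1) / (N : ℝ))) := by
      funext N
      show ((2 * (N : ℝ) * (M : ℝ) + 1) ^ k) ^ ((N : ℝ)⁻¹) =
        Real.exp ((k : ℝ) * (Real.log (2 * (N : ℝ) * (M : ℝ) + 1) / (N : ℝ)))
      rw [Real.rpow_def_of_pos (by positivity), Real.log_pow]
      ring_nf
    rw [hrw]
    have h7 := hlogdiv.const_mul (k : ℝ)
    rw [mul_zero] at h7
    have h8 := (Real.continuous_exp.tendsto 0).comp h7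
    rw [Real.exp_zero] at h8
    exact h8
  have hg : Tendsto (fun N : ℕ => (r : ℝ) / den N) atTop (𝓝 (r : ℝ)) := by
    have := Filter.Tendsto.div (tendsto_const_nhds (x := (r : ℝ))) hden1 one_ne_zero
    rw [div_one] at this
    exact this
  refine le_of_tendsto_of_tendsto hg hL ?_
  filter_upwards [eventually_ge_atTop 1] with N hN
  have hN0 : (N : ℝ) ≠ 0 := Nat.cast_ne_zero.2 (by omega)
  have hkeyR : ((r : ℝ)) ^ (N : ℕ) ≤
      (2 * (N : ℝ) * (M : ℝ) + 1) ^ k * (Qset (setPow Ψ N) : ℝ) := by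
    have := hkey N
    have hcast : ((r ^ N : ℕ) : ℝ) ≤ (((2 * N * M + 1) ^ k * Qset (setPow Ψ N) : ℕ) : ℝ) := by
      exact_mod_cast this
    push_cast at hcast
    convert hcast using 2
  set C : ℝ := (2 * (N : ℝ) * (M : ℝ) + 1) ^ k with hC
  have hC0 : (0 : ℝ) < C := by positivity
  have hQ0 : (0 : ℝ) ≤ (Qset (setPow Ψ N) : ℝ) := Nat.cast_nonneg _
  have hr' : (((r : ℝ)) ^ (N : ℕ)) ^ ((N : ℝ)⁻¹) = (r : ℝ) := by
    rw [← Real.rpow_natCast (r : ℝ) N, ← Real.rpow_mul (Nat.cast_nonneg r),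
      mul_inv_cancel₀ hN0, Real.rpow_one]
  have h6 := Real.rpow_le_rpow (by positivity) hkeyR
    (by positivity : (0 : ℝ) ≤ (N : ℝ)⁻¹)
  rw [hr'] at h6
  rw [Real.mul_rpow hC0.le hQ0] at h6
  show (r : ℝ) / den N ≤ (Qset (setPow Ψ N) : ℝ) ^ ((N : ℝ)⁻¹)
  simp only [hden]
  rw [div_le_iff₀ (by positivity)]
  calc (r : ℝ) ≤ C ^ ((N : ℝ)⁻¹) * (Qset (setPow Ψ N) : ℝ) ^ ((N : ℝ)⁻¹) := h6
    _ = (Qset (setPow Ψ N) : ℝ) ^ ((N : ℝ)⁻¹) * ((2 * (N : ℝ) * (M : ℝ) + 1) ^ k) ^ ((N : ℝ)⁻¹) := by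
        rw [mul_comm]
  

end CVZ

end
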